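/- Let ℓ(t) = exp(−|t|) and g_σ(μ) = E_{z ∼ N(μ, σ²)}[ℓ(z)]. Then the partial derivative q_σ(μ) := ∂g_σ(μ)/∂σ satisfies the exact formula q_σ(μ) = (1/2)·exp(σ²/2)·σ·[exp(μ)·erfc(σ/√2 + μ/(√2 σ)) + exp(−μ)·erfc(σ/√2 − μ/(√2 σ))] − √(2/π)·exp(−μ²/(2σ²)). -/

import Mathlib

open MeasureTheory ProbabilityTheory Real Set

/-- `g σ μ = E_{z ∼ N(μ, σ²)}[exp(−|z|)]`. -/
noncomputable def gConv (σ μ : ℝ) : ℝ :=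
  ∫ z, Real.exp (-|z|) ∂(gaussianReal μ (σ ^ 2).toNNReal)

/-- The complementary error function `erfc t = (2/√π) ∫_t^∞ exp(−s²) ds`. -/
noncomputable def erfc (t : ℝ) : ℝ :=
  (2 / Real.sqrt π) * ∫ s in Ioi t, Real.exp (-s ^ 2)

lemma my_comp_add_right_Ioi (g : ℝ → ℝ) (a d : ℝ) :
    (∫ x in Ioi a, g (x + d)) = ∫ x in Ioi (a + d), g x := by
  rw [← integral_indicator measurableSet_Ioi, ← integral_indicator measurableSet_Ioi,
    ← integral_add_right_eq_self (fun x => Set.indicator (Ioi (a + d)) g x) d]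
  congr 1
  ext x
  simp only [Set.indicator, mem_Ioi]
  by_cases h : a < x
  · rw [if_pos h, if_pos (by linarith)]
  · rw [if_neg h, if_neg (by intro hc; exact h (by linarith))]

lemma integrable_exp_neg_sq : Integrable (fun s : ℝ => Real.exp (-s ^ 2)) := by
  simpa using integrable_exp_neg_mul_sq one_pos

lemma hasDerivAt_erfc (t : ℝ) :
    HasDerivAt erfc (-(2 / Real.sqrt π) * Real.exp (-t ^ 2)) t := by
  have hint := integrable_exp_neg_sq
  have hcont : Continuous (fun s : ℝ => Real.exp (-s ^ 2)) := by continuity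
  have key : ∀ u : ℝ, erfc u =
      (2 / Real.sqrt π) * ((∫ s, Real.exp (-s ^ 2)) -
        ((∫ s in Iic (0:ℝ), Real.exp (-s ^ 2)) + ∫ s in (0:ℝ)..u, Real.exp (-s ^ 2))) := by
    intro u
    have h1 := intervalIntegral.integral_Iic_add_Ioi (b := u) hint.integrableOn hint.integrableOn
    have h2 := intervalIntegral.integral_Iic_sub_Iic (a := (0:ℝ)) (b := u)
      hint.integrableOn hint.integrableOn
    unfold erfc
    have : (∫ s in Ioi u, Real.exp (-s ^ 2)) =
        (∫ s, Real.exp (-s ^ 2)) -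
          ((∫ s in Iic (0:ℝ), Real.exp (-s ^ 2)) + ∫ s in (0:ℝ)..u, Real.exp (-s ^ 2)) := by
      linarith
    rw [this]
  have hd : HasDerivAt (fun u => ∫ s in (0:ℝ)..u, Real.exp (-s ^ 2)) (Real.exp (-t ^ 2)) t :=
    intervalIntegral.integral_hasDerivAt_right (hint.intervalIntegrable)
      hcont.aestronglyMeasurable.stronglyMeasurableAtFilter hcont.continuousAt
  have H : HasDerivAt (fun u => (2 / Real.sqrt π) * ((∫ s, Real.exp (-s ^ 2)) -
      ((∫ s in Iic (0:ℝ), Real.exp (-s ^ 2)) + ∫ s in (0:ℝ)..u, Real.exp (-s ^ 2))))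
      (-(2 / Real.sqrt π) * Real.exp (-t ^ 2)) t := by
    have := (((hasDerivAt_const t (∫ s, Real.exp (-s ^ 2))).sub
      ((hasDerivAt_const t (∫ s in Iic (0:ℝ), Real.exp (-s ^ 2))).add hd)).const_mul
      (2 / Real.sqrt π))
    exact this.congr_deriv (by ring)
  exact H.congr_of_eventuallyEq (Filter.Eventually.of_forall key)

lemma sqrt_two_pi_sq {σ : ℝ} (hσ : 0 < σ) :
    Real.sqrt (2 * π * σ ^ 2) = Real.sqrt 2 * Real.sqrt π * σ := by
  rw [Real.sqrt_mul (by positivity), Real.sqrt_mul (by norm_num), Real.sqrt_sq hσ.le]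

lemma gauss_tail {σ : ℝ} (hσ : 0 < σ) (m : ℝ) :
    (∫ z in Ioi (0 : ℝ), gaussianPDFReal m (σ ^ 2).toNNReal z)
      = (1 / 2) * erfc (-m / (Real.sqrt 2 * σ)) := by
  have hv : (((σ ^ 2).toNNReal : NNReal) : ℝ) = σ ^ 2 := Real.coe_toNNReal _ (sq_nonneg σ)
  have hs2 : (0:ℝ) < Real.sqrt 2 := by positivity
  have hc : (0:ℝ) < (Real.sqrt 2 * σ)⁻¹ := by positivity
  have hexp : ∀ z : ℝ, gaussianPDFReal m (σ ^ 2).toNNReal z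
      = (Real.sqrt 2 * Real.sqrt π * σ)⁻¹ *
        Real.exp (-((Real.sqrt 2 * σ)⁻¹ * (z + -m)) ^ 2) := by
    intro z
    rw [gaussianPDFReal, hv, sqrt_two_pi_sq hσ]
    congr 1
    have h2 : Real.sqrt 2 ^ 2 = 2 := Real.sq_sqrt (by norm_num)
    field_simp
    ring_nf
    rw [inv_pow (Real.sqrt 2), h2]
    ring
  simp_rw [hexp]
  rw [integral_const_mul, my_comp_add_right_Ioi (fun u => Real.exp (-((Real.sqrt 2 * σ)⁻¹ * u) ^ 2)) 0 (-m)]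
  rw [integral_comp_mul_left_Ioi (fun s => Real.exp (-s ^ 2)) (0 + -m) hc]
  rw [smul_eq_mul]
  have harg : (Real.sqrt 2 * σ)⁻¹ * (0 + -m) = -m / (Real.sqrt 2 * σ) := by ring
  rw [harg]
  unfold erfc
  field_simp

lemma pdf_neg (m : ℝ) (v : NNReal) (z : ℝ) :
    gaussianPDFReal m v (-z) = gaussianPDFReal (-m) v z := by
  simp only [gaussianPDFReal]
  congr 2
  ring

lemma gauss_tail_left {σ : ℝ} (hσ : 0 < σ) (m : ℝ) :
    (∫ z in Iio (0 : ℝ), gaussianPDFReal m (σ ^ 2).toNNReal z)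
      = (1 / 2) * erfc (m / (Real.sqrt 2 * σ)) := by
  have h0 : (∫ z in Iio (0 : ℝ), gaussianPDFReal m (σ ^ 2).toNNReal z)
      = ∫ z in Iic (0 : ℝ), gaussianPDFReal m (σ ^ 2).toNNReal z := by
    rw [integral_Iic_eq_integral_Iio]
  rw [h0]
  have h1 : (∫ z in Iic (0 : ℝ), gaussianPDFReal m (σ ^ 2).toNNReal z)
      = ∫ z in Iic (0 : ℝ), gaussianPDFReal (-m) (σ ^ 2).toNNReal (-z) := by
    congr 1
    ext z
    rw [pdf_neg, neg_neg]
  rw [h1, integral_comp_neg_Iic, neg_zero, gauss_tail hσ, neg_neg]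

lemma complete_sq_pos {σ : ℝ} (hσ : 0 < σ) (μ z : ℝ) :
    gaussianPDFReal μ (σ ^ 2).toNNReal z * Real.exp (-z)
      = Real.exp (σ ^ 2 / 2 - μ) * gaussianPDFReal (μ - σ ^ 2) (σ ^ 2).toNNReal z := by
  have hv : (((σ ^ 2).toNNReal : NNReal) : ℝ) = σ ^ 2 := Real.coe_toNNReal _ (sq_nonneg σ)
  simp only [gaussianPDFReal, hv]
  have h : (-(z - μ) ^ 2 / (2 * σ ^ 2)) + -z
      = (σ ^ 2 / 2 - μ) + (-(z - (μ - σ ^ 2)) ^ 2 / (2 * σ ^ 2)) := by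
    field_simp
    ring
  rw [mul_assoc, ← Real.exp_add, h, Real.exp_add]
  ring

lemma complete_sq_neg {σ : ℝ} (hσ : 0 < σ) (μ z : ℝ) :
    gaussianPDFReal μ (σ ^ 2).toNNReal z * Real.exp z
      = Real.exp (σ ^ 2 / 2 + μ) * gaussianPDFReal (μ + σ ^ 2) (σ ^ 2).toNNReal z := by
  have hv : (((σ ^ 2).toNNReal : NNReal) : ℝ) = σ ^ 2 := Real.coe_toNNReal _ (sq_nonneg σ)
  simp only [gaussianPDFReal, hv]
  have h : (-(z - μ) ^ 2 / (2 * σ ^ 2)) + z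
      = (σ ^ 2 / 2 + μ) + (-(z - (μ + σ ^ 2)) ^ 2 / (2 * σ ^ 2)) := by
    field_simp
    ring
  rw [mul_assoc, ← Real.exp_add, h, Real.exp_add]
  ring

lemma gConv_pdf (σ μ : ℝ) (hσ : 0 < σ) :
    gConv σ μ = ∫ z, gaussianPDFReal μ (σ ^ 2).toNNReal z * Real.exp (-|z|) := by
  have hv : ((σ ^ 2).toNNReal : NNReal) ≠ 0 := by
    simp [Real.toNNReal_eq_zero, not_le, pow_pos hσ, hσ.ne']
  rw [gConv, gaussianReal_of_var_ne_zero μ hv]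
  have : (gaussianPDF μ (σ ^ 2).toNNReal)
      = fun x => ((Real.toNNReal (gaussianPDFReal μ (σ ^ 2).toNNReal x) : NNReal) : ENNReal) := by
    funext x
    rfl
  rw [this, integral_withDensity_eq_integral_smul
    ((measurable_gaussianPDFReal μ (σ ^ 2).toNNReal).real_toNNReal)]
  congr 1
  funext z
  rw [NNReal.smul_def, smul_eq_mul, Real.coe_toNNReal _ (gaussianPDFReal_nonneg _ _ _)]

lemma gConv_closed (μ : ℝ) {σ : ℝ} (hσ : 0 < σ) :
    gConv σ μ = (1 / 2) * Real.exp (σ ^ 2 / 2) *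
      (Real.exp μ * erfc (σ / Real.sqrt 2 + μ / (Real.sqrt 2 * σ)) +
        Real.exp (-μ) * erfc (σ / Real.sqrt 2 - μ / (Real.sqrt 2 * σ))) := by
  have hint : Integrable (fun z => gaussianPDFReal μ (σ ^ 2).toNNReal z * Real.exp (-|z|)) := by
    refine (integrable_gaussianPDFReal μ (σ ^ 2).toNNReal).mono'
      ?_ (Filter.Eventually.of_forall fun z => ?_)
    · exact ((measurable_gaussianPDFReal _ _).mul
        (continuous_exp.comp continuous_abs.neg).measurable).aestronglyMeasurable
    · rw [Real.norm_eq_abs, abs_mul, abs_of_nonneg (gaussianPDFReal_nonneg _ _ _),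
        abs_of_nonneg (Real.exp_nonneg _)]
      nth_rewrite 2 [show gaussianPDFReal μ (σ ^ 2).toNNReal z
        = gaussianPDFReal μ (σ ^ 2).toNNReal z * 1 from (mul_one _).symm]
      exact mul_le_mul_of_nonneg_left (Real.exp_le_one_iff.mpr (neg_nonpos.mpr (abs_nonneg z)))
        (gaussianPDFReal_nonneg _ _ _)
  rw [gConv_pdf σ μ hσ,
    ← intervalIntegral.integral_Iio_add_Ici (b := (0:ℝ)) hint.integrableOn hint.integrableOn]
  have hleft : (∫ z in Iio (0:ℝ), gaussianPDFReal μ (σ ^ 2).toNNReal z * Real.exp (-|z|))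
      = Real.exp (σ ^ 2 / 2 + μ) * ((1 / 2) * erfc (μ / (Real.sqrt 2 * σ) + σ / Real.sqrt 2)) := by
    have harg : (μ + σ ^ 2) / (Real.sqrt 2 * σ) = μ / (Real.sqrt 2 * σ) + σ / Real.sqrt 2 := by
      have hs2 : Real.sqrt 2 ≠ 0 := by positivity
      field_simp
    rw [← harg, ← gauss_tail_left hσ (μ + σ ^ 2), ← integral_const_mul]
    refine setIntegral_congr_fun measurableSet_Iio fun z hz => ?_
    rw [abs_of_nonpos (le_of_lt hz), neg_neg, complete_sq_neg hσ]
  have hright : (∫ z in Ici (0:ℝ), gaussianPDFReal μ (σ ^ 2).toNNReal z * Real.exp (-|z|))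
      = Real.exp (σ ^ 2 / 2 - μ) * ((1 / 2) * erfc (σ / Real.sqrt 2 - μ / (Real.sqrt 2 * σ))) := by
    have h0 : (∫ z in Ici (0:ℝ), gaussianPDFReal μ (σ ^ 2).toNNReal z * Real.exp (-|z|))
        = ∫ z in Ioi (0:ℝ), gaussianPDFReal μ (σ ^ 2).toNNReal z * Real.exp (-|z|) :=
      integral_Ici_eq_integral_Ioi
    have harg : -(μ - σ ^ 2) / (Real.sqrt 2 * σ) = σ / Real.sqrt 2 - μ / (Real.sqrt 2 * σ) := by
      have hs2 : Real.sqrt 2 ≠ 0 := by positivity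
      field_simp
      ring
    rw [h0, ← harg, ← gauss_tail hσ (μ - σ ^ 2), ← integral_const_mul]
    refine setIntegral_congr_fun measurableSet_Ioi fun z hz => ?_
    rw [abs_of_nonneg (le_of_lt hz), complete_sq_pos hσ]
  rw [hleft, hright, Real.exp_add, Real.exp_sub, Real.exp_neg,
    add_comm (μ / (Real.sqrt 2 * σ))]
  have hμ : Real.exp μ ≠ 0 := Real.exp_ne_zero μ
  field_simp

/-- Closed form for `q_σ(μ) = ∂g_σ(μ)/∂σ`:
`q_σ(μ) = (1/2) exp(σ²/2) σ [exp(μ) erfc(σ/√2 + μ/(√2σ)) + exp(−μ) erfc(σ/√2 − μ/(√2σ))]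
  − √(2/π) exp(−μ²/(2σ²))`. -/
theorem deriv_gaussian_smoothed_loss (σ μ : ℝ) (hσ : 0 < σ) :
    HasDerivAt (fun s => gConv s μ)
      ((1 / 2) * Real.exp (σ ^ 2 / 2) * σ *
          (Real.exp μ * erfc (σ / Real.sqrt 2 + μ / (Real.sqrt 2 * σ)) +
            Real.exp (-μ) * erfc (σ / Real.sqrt 2 - μ / (Real.sqrt 2 * σ))) -
        Real.sqrt (2 / π) * Real.exp (-μ ^ 2 / (2 * σ ^ 2))) σ := by
  have hs : Real.sqrt 2 ^ 2 = 2 := Real.sq_sqrt (by norm_num)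
  have hs0 : Real.sqrt 2 ≠ 0 := by positivity
  have hσ0 : σ ≠ 0 := hσ.ne'
  have hπ0 : Real.sqrt π ≠ 0 := by positivity
  have hmul : HasDerivAt (fun s : ℝ => Real.sqrt 2 * s) (Real.sqrt 2) σ := by
    simpa using (hasDerivAt_id σ).const_mul (Real.sqrt 2)
  have hA : HasDerivAt (fun s : ℝ => s / Real.sqrt 2 + μ / (Real.sqrt 2 * s))
      ((1 - μ / σ ^ 2) / Real.sqrt 2) σ := by
    have h1 : HasDerivAt (fun s : ℝ => s / Real.sqrt 2) (1 / Real.sqrt 2) σ := by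
      simpa using (hasDerivAt_id σ).div_const (Real.sqrt 2)
    have h3 := (hasDerivAt_const σ μ).div hmul (by positivity : Real.sqrt 2 * σ ≠ 0)
    refine (h1.add h3).congr_deriv ?_
    field_simp
    ring_nf
  have hB : HasDerivAt (fun s : ℝ => s / Real.sqrt 2 - μ / (Real.sqrt 2 * s))
      ((1 + μ / σ ^ 2) / Real.sqrt 2) σ := by
    have h1 : HasDerivAt (fun s : ℝ => s / Real.sqrt 2) (1 / Real.sqrt 2) σ := by
      simpa using (hasDerivAt_id σ).div_const (Real.sqrt 2)
    have h3 := (hasDerivAt_const σ μ).div hmul (by positivity : Real.sqrt 2 * σ ≠ 0)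
    refine (h1.sub h3).congr_deriv ?_
    field_simp
    ring_nf
  have heA := (hasDerivAt_erfc (σ / Real.sqrt 2 + μ / (Real.sqrt 2 * σ))).comp σ hA
  have heB := (hasDerivAt_erfc (σ / Real.sqrt 2 - μ / (Real.sqrt 2 * σ))).comp σ hB
  have hexp : HasDerivAt (fun s : ℝ => Real.exp (s ^ 2 / 2)) (Real.exp (σ ^ 2 / 2) * σ) σ := by
    have := (((hasDerivAt_pow 2 σ).div_const 2)).exp
    convert this using 1
    ring
  have hsum := (heA.const_mul (Real.exp μ)).add (heB.const_mul (Real.exp (-μ)))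
  have H := ((hexp.mul hsum).const_mul ((1:ℝ) / 2))
  simp only [Function.comp] at H
  have hev : (fun s => gConv s μ) =ᶠ[nhds σ] (fun s => (1 / 2) *
      (Real.exp (s ^ 2 / 2) * (Real.exp μ * erfc (s / Real.sqrt 2 + μ / (Real.sqrt 2 * s)) +
        Real.exp (-μ) * erfc (s / Real.sqrt 2 - μ / (Real.sqrt 2 * s))))) := by
    filter_upwards [Ioi_mem_nhds hσ] with s hs'
    rw [gConv_closed μ hs']
    ring
  have H2 := H.congr_of_eventuallyEq hev
  have hE1 : Real.exp (σ ^ 2 / 2) * Real.exp μ *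
      Real.exp (-(σ / Real.sqrt 2 + μ / (Real.sqrt 2 * σ)) ^ 2)
      = Real.exp (-μ ^ 2 / (2 * σ ^ 2)) := by
    rw [← Real.exp_add, ← Real.exp_add]
    congr 1
    field_simp
    ring_nf
    rw [hs]
    ring
  have hE2 : Real.exp (σ ^ 2 / 2) * Real.exp (-μ) *
      Real.exp (-(σ / Real.sqrt 2 - μ / (Real.sqrt 2 * σ)) ^ 2)
      = Real.exp (-μ ^ 2 / (2 * σ ^ 2)) := by
    rw [← Real.exp_add, ← Real.exp_add]
    congr 1
    field_simp
    ring_nf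
    rw [hs]
    ring
  have h2pi : Real.sqrt (2 / π) = Real.sqrt 2 / Real.sqrt π :=
    Real.sqrt_div' 2 (le_of_lt pi_pos) ▸ rfl
  have key : Real.exp (σ ^ 2 / 2) *
      (Real.exp μ * (-(2 / Real.sqrt π) *
          Real.exp (-(σ / Real.sqrt 2 + μ / (Real.sqrt 2 * σ)) ^ 2) *
          ((1 - μ / σ ^ 2) / Real.sqrt 2)) +
        Real.exp (-μ) * (-(2 / Real.sqrt π) *
          Real.exp (-(σ / Real.sqrt 2 - μ / (Real.sqrt 2 * σ)) ^ 2) *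
          ((1 + μ / σ ^ 2) / Real.sqrt 2)))
      = -2 * Real.sqrt (2 / π) * Real.exp (-μ ^ 2 / (2 * σ ^ 2)) := by
    have step1 : Real.exp (σ ^ 2 / 2) *
        (Real.exp μ * (-(2 / Real.sqrt π) *
            Real.exp (-(σ / Real.sqrt 2 + μ / (Real.sqrt 2 * σ)) ^ 2) *
            ((1 - μ / σ ^ 2) / Real.sqrt 2)) +
          Real.exp (-μ) * (-(2 / Real.sqrt π) *
            Real.exp (-(σ / Real.sqrt 2 - μ / (Real.sqrt 2 * σ)) ^ 2) *
            ((1 + μ / σ ^ 2) / Real.sqrt 2)))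
        = -(2 / Real.sqrt π) / Real.sqrt 2 *
          ((Real.exp (σ ^ 2 / 2) * Real.exp μ *
              Real.exp (-(σ / Real.sqrt 2 + μ / (Real.sqrt 2 * σ)) ^ 2)) * (1 - μ / σ ^ 2) +
            (Real.exp (σ ^ 2 / 2) * Real.exp (-μ) *
              Real.exp (-(σ / Real.sqrt 2 - μ / (Real.sqrt 2 * σ)) ^ 2)) * (1 + μ / σ ^ 2)) := by
      ring
    rw [step1, hE1, hE2, h2pi]
    have step2 : Real.exp (-μ ^ 2 / (2 * σ ^ 2)) * (1 - μ / σ ^ 2) +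
        Real.exp (-μ ^ 2 / (2 * σ ^ 2)) * (1 + μ / σ ^ 2)
        = 2 * Real.exp (-μ ^ 2 / (2 * σ ^ 2)) := by ring
    rw [step2]
    field_simp
    ring_nf
    rw [hs]
  refine H2.congr_deriv ?_
  rw [key]
  simp only [Pi.add_apply]
  ring
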